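/- Let M be a finite rectangular monoid generated by its regular elements (every element of M is a product of regular elements). Let e, f ∈ M be idempotents, X = MeM, Y = MfM, and let m ∈ M satisfy m = f*m*e and m ∉ nup(Y)·nup(X). Then: (1) if X ⊄ Y and Y ⊄ X, there exist a, b ∈ M with m = b*a, Ma = Me and bM = fM (m factors as a split monomorphism followed by a split epimorphism in the Karoubi envelope); (2) if X ⊊ Y, then Mm = Me; (3) if Y ⊊ X, then mM = fM; (4) if e = f, then m is a unit of the monoid e*M*e. Conversely, in cases (2), (3) and (4), every m ∈ M with m = f*m*e satisfying respectively Mm = Me, mM = fM, or m a unit of e*M*e, satisfies m ∉ nup(Y)·nup(X). -/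

import Mathlib

/-- `Mx = {a*x | a ∈ M}` -/
def leftIdeal {M : Type*} [Monoid M] (x : M) : Set M := {y | ∃ a, y = a * x}

/-- `xM = {x*a | a ∈ M}` -/
def rightIdeal {M : Type*} [Monoid M] (x : M) : Set M := {y | ∃ a, y = x * a}

/-- `MxM = {a*x*b | a,b ∈ M}` -/
def twoSidedIdeal {M : Type*} [Monoid M] (x : M) : Set M := {y | ∃ a b, y = a * x * b}

/-- `nup(X) = {m ∈ M | ¬(X ⊆ MmM)}` -/
def nup {M : Type*} [Monoid M] (X : Set M) : Set M := {m | ¬ X ⊆ twoSidedIdeal m}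

/-- A finite monoid is rectangular if for all idempotents `e, f` with `MeM = MfM`,
the product `e*f` is idempotent and `M(e*f)M = MeM`. -/
def IsRectangular (M : Type*) [Monoid M] : Prop :=
  ∀ e f : M, e * e = e → f * f = f → twoSidedIdeal e = twoSidedIdeal f →
    (e * f) * (e * f) = e * f ∧ twoSidedIdeal (e * f) = twoSidedIdeal e

namespace AIaux

variable {M : Type*} [Monoid M]

lemma mem_tsi_self (x : M) : x ∈ twoSidedIdeal x := ⟨1, 1, by simp⟩

lemma tsi_subset_of_mem {x y : M} (h : x ∈ twoSidedIdeal y) :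
    twoSidedIdeal x ⊆ twoSidedIdeal y := by
  obtain ⟨a, b, rfl⟩ := h
  rintro z ⟨c, d, rfl⟩
  exact ⟨c * a, b * d, by simp [mul_assoc]⟩

lemma tsi_eq {x y : M} (h1 : x ∈ twoSidedIdeal y) (h2 : y ∈ twoSidedIdeal x) :
    twoSidedIdeal x = twoSidedIdeal y :=
  Set.Subset.antisymm (tsi_subset_of_mem h1) (tsi_subset_of_mem h2)

lemma exists_pow_idem [Fintype M] (c : M) : ∃ k : ℕ, 0 < k ∧ c ^ k * c ^ k = c ^ k := by
  obtain ⟨i, j, hne, hij⟩ := Finite.exists_ne_map_eq_of_infinite (fun n : ℕ => c ^ n)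
  have key : ∀ i j : ℕ, i < j → c ^ i = c ^ j → ∃ k : ℕ, 0 < k ∧ c ^ k * c ^ k = c ^ k := by
    intro i j hlt heq
    have hd0 : 0 < j - i := Nat.sub_pos_of_lt hlt
    have hstep : ∀ n, i ≤ n → c ^ (n + (j - i)) = c ^ n := by
      intro n hn
      have h1 : n + (j - i) = (n - i) + j := by omega
      have h2 : n = (n - i) + i := by omega
      rw [h1, pow_add, ← heq, ← pow_add, ← h2]
    have hmany : ∀ t n, i ≤ n → c ^ (n + t * (j - i)) = c ^ n := by
      intro t
      induction t with
      | zero => simp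
      | succ t ih =>
        intro n hn
        have h1 : n + (t + 1) * (j - i) = (n + t * (j - i)) + (j - i) := by ring
        rw [h1, hstep _ (le_trans hn (Nat.le_add_right _ _)), ih n hn]
    refine ⟨(i + 1) * (j - i), by positivity, ?_⟩
    rw [← pow_add]
    have h3 : (i + 1) * (j - i) + (i + 1) * (j - i) = (i + 1) * (j - i) + (i + 1) * (j - i) := rfl
    have h4 : i ≤ (i + 1) * (j - i) := by nlinarith
    exact hmany (i + 1) _ h4
  rcases lt_or_gt_of_ne hne with h | h
  · exact key i j h hij
  · exact key j i h hij.symm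

lemma stab_R [Fintype M] {a b x y : M} (h : a = x * (a * (b * y))) :
    ∃ z, a = a * (b * z) := by
  obtain ⟨k, hk, hkk⟩ := exists_pow_idem (b * y)
  have key : ∀ n : ℕ, a = x ^ n * (a * (b * y) ^ n) := by
    intro n
    induction n with
    | zero => simp
    | succ n ih =>
      calc a = x * (a * (b * y)) := h
        _ = x * ((x ^ n * (a * (b * y) ^ n)) * (b * y)) := by rw [← ih]
        _ = x ^ (n + 1) * (a * (b * y) ^ (n + 1)) := by
            rw [pow_succ (b * y) n, pow_succ' x n]; simp only [mul_assoc]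
  have ha : a * (b * y) ^ k = a := by
    calc a * (b * y) ^ k = (x ^ k * (a * (b * y) ^ k)) * (b * y) ^ k := by rw [← key k]
      _ = x ^ k * (a * ((b * y) ^ k * (b * y) ^ k)) := by simp only [mul_assoc]
      _ = x ^ k * (a * (b * y) ^ k) := by rw [hkk]
      _ = a := (key k).symm
  obtain ⟨k', rfl⟩ : ∃ k', k = k' + 1 := ⟨k - 1, by omega⟩
  refine ⟨y * (b * y) ^ k', ?_⟩
  calc a = a * (b * y) ^ (k' + 1) := ha.symm
    _ = a * (b * (y * (b * y) ^ k')) := by rw [pow_succ' (b * y) k']; simp only [mul_assoc]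

lemma stab_L [Fintype M] {a b x y : M} (h : a = x * (b * (a * y))) :
    ∃ z, a = z * (b * a) := by
  obtain ⟨k, hk, hkk⟩ := exists_pow_idem (x * b)
  have h' : a = (x * b) * (a * y) := by
    conv_lhs => rw [h]
    simp only [mul_assoc]
  have key : ∀ n : ℕ, a = (x * b) ^ n * (a * y ^ n) := by
    intro n
    induction n with
    | zero => simp
    | succ n ih =>
      calc a = (x * b) * (a * y) := h'
        _ = (x * b) * (((x * b) ^ n * (a * y ^ n)) * y) := by rw [← ih]
        _ = (x * b) ^ (n + 1) * (a * y ^ (n + 1)) := by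
            rw [pow_succ y n, pow_succ' (x * b) n]; simp only [mul_assoc]
  have ha : (x * b) ^ k * a = a := by
    calc (x * b) ^ k * a = (x * b) ^ k * ((x * b) ^ k * (a * y ^ k)) := by rw [← key k]
      _ = ((x * b) ^ k * (x * b) ^ k) * (a * y ^ k) := by simp only [mul_assoc]
      _ = (x * b) ^ k * (a * y ^ k) := by rw [hkk]
      _ = a := (key k).symm
  obtain ⟨k', rfl⟩ : ∃ k', k = k' + 1 := ⟨k - 1, by omega⟩
  refine ⟨(x * b) ^ k' * x, ?_⟩
  calc a = (x * b) ^ (k' + 1) * a := ha.symm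
    _ = ((x * b) ^ k' * x) * (b * a) := by rw [pow_succ (x * b) k']; simp only [mul_assoc]


lemma Dprime_L [Fintype M] (hrect : IsRectangular M) {s g : M}
    (hs : s * s = s) (hg : g * g = g) (hmem : g ∈ twoSidedIdeal s) :
    ∃ z, g = z * (s * g) := by
  obtain ⟨X, Y, hXY⟩ := hmem
  have hXt : ∀ t : M, X * (s * (Y * t)) = g * t := by
    intro t; rw [← mul_assoc, ← mul_assoc, ← hXY]
  have hX0 : X * (s * Y) = g := by rw [← mul_assoc]; exact hXY.symm
  have hst : ∀ t : M, s * (s * t) = s * t := fun t => by rw [← mul_assoc, hs]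
  have hgt : ∀ t : M, g * (g * t) = g * t := fun t => by rw [← mul_assoc, hg]
  have hcc : (s * (Y * (g * (X * s)))) * (s * (Y * (g * (X * s)))) = s * (Y * (g * (X * s))) := by
    calc (s * (Y * (g * (X * s)))) * (s * (Y * (g * (X * s))))
        = s * (Y * (g * (X * (s * (s * (Y * (g * (X * s)))))))) := by simp only [mul_assoc]
      _ = s * (Y * (g * (X * (s * (Y * (g * (X * s))))))) := by rw [hst]
      _ = s * (Y * (g * (g * (g * (X * s))))) := by rw [hXt]
      _ = s * (Y * (g * (X * s))) := by rw [hgt, hgt]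
  have hcg : (s * (Y * (g * (X * s)))) ∈ twoSidedIdeal g :=
    ⟨s * Y, X * s, by simp only [mul_assoc]⟩
  have hgc : g ∈ twoSidedIdeal (s * (Y * (g * (X * s)))) := by
    refine ⟨X, Y, ?_⟩
    simp only [mul_assoc]
    rw [hXt, hgt, hX0, hg]
  have heq : twoSidedIdeal (s * (Y * (g * (X * s)))) = twoSidedIdeal g := tsi_eq hcg hgc
  obtain ⟨-, hJ⟩ := hrect _ g hcc hg heq
  have hgmem : g ∈ twoSidedIdeal ((s * (Y * (g * (X * s)))) * g) := by rw [hJ]; exact hgc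
  obtain ⟨α, β, hαβ⟩ := hgmem
  have h2 : g = (α * (s * (Y * (g * X)))) * (s * (g * β)) := by
    simp only [mul_assoc] at hαβ ⊢
    exact hαβ
  exact stab_L h2

lemma Dprime_R [Fintype M] (hrect : IsRectangular M) {s g : M}
    (hs : s * s = s) (hg : g * g = g) (hmem : g ∈ twoSidedIdeal s) :
    ∃ z, g = (g * s) * z := by
  obtain ⟨X, Y, hXY⟩ := hmem
  have hXt : ∀ t : M, X * (s * (Y * t)) = g * t := by
    intro t; rw [← mul_assoc, ← mul_assoc, ← hXY]
  have hX0 : X * (s * Y) = g := by rw [← mul_assoc]; exact hXY.symm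
  have hst : ∀ t : M, s * (s * t) = s * t := fun t => by rw [← mul_assoc, hs]
  have hgt : ∀ t : M, g * (g * t) = g * t := fun t => by rw [← mul_assoc, hg]
  have hcc : (s * (Y * (g * (X * s)))) * (s * (Y * (g * (X * s)))) = s * (Y * (g * (X * s))) := by
    calc (s * (Y * (g * (X * s)))) * (s * (Y * (g * (X * s))))
        = s * (Y * (g * (X * (s * (s * (Y * (g * (X * s)))))))) := by simp only [mul_assoc]
      _ = s * (Y * (g * (X * (s * (Y * (g * (X * s))))))) := by rw [hst]
      _ = s * (Y * (g * (g * (g * (X * s))))) := by rw [hXt]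
      _ = s * (Y * (g * (X * s))) := by rw [hgt, hgt]
  have hcg : (s * (Y * (g * (X * s)))) ∈ twoSidedIdeal g :=
    ⟨s * Y, X * s, by simp only [mul_assoc]⟩
  have hgc : g ∈ twoSidedIdeal (s * (Y * (g * (X * s)))) := by
    refine ⟨X, Y, ?_⟩
    simp only [mul_assoc]
    rw [hXt, hgt, hX0, hg]
  have heq : twoSidedIdeal g = twoSidedIdeal (s * (Y * (g * (X * s)))) := (tsi_eq hcg hgc).symm
  obtain ⟨-, hJ⟩ := hrect g _ hg hcc heq
  have hgmem : g ∈ twoSidedIdeal (g * (s * (Y * (g * (X * s))))) := by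
    rw [hJ]; exact mem_tsi_self g
  obtain ⟨α, β, hαβ⟩ := hgmem
  have h2 : g = α * (g * (s * (Y * (g * (X * (s * β)))))) := by
    simp only [mul_assoc] at hαβ ⊢
    exact hαβ
  obtain ⟨z, hz⟩ := stab_R h2
  exact ⟨z, by rw [mul_assoc]; exact hz⟩

lemma DL [Fintype M] (hrect : IsRectangular M) {u v p q : M}
    (hu : u = u * p * u) (hv : v = v * q * v) (hmem : v ∈ twoSidedIdeal u) :
    ∃ z, v = z * (u * v) := by
  obtain ⟨x, y, hxy⟩ := hmem
  have hgg : (v * q) * (v * q) = v * q := by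
    have h1 : (v * q) * (v * q) = (v * q * v) * q := by simp only [mul_assoc]
    rw [h1, ← hv]
  have hss : (p * u) * (p * u) = p * u := by
    have h1 : (p * u) * (p * u) = p * (u * p * u) := by simp only [mul_assoc]
    rw [h1, ← hu]
  have hus1 : ∀ t : M, u * (p * (u * t)) = u * t := fun t => by
    rw [← mul_assoc, ← mul_assoc, ← hu]
  have hqv1 : v * (q * v) = v := by rw [← mul_assoc, ← hv]
  have hmem2 : (v * q) ∈ twoSidedIdeal (p * u) := by
    refine ⟨x * u, y * q, ?_⟩
    rw [hxy]
    simp only [mul_assoc]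
    rw [hus1]
  obtain ⟨z, hz⟩ := Dprime_L hrect hss hgg hmem2
  refine ⟨z * p, ?_⟩
  calc v = (v * q) * v := by rw [← hv]
    _ = (z * ((p * u) * (v * q))) * v := by rw [← hz]
    _ = z * (p * (u * (v * (q * v)))) := by simp only [mul_assoc]
    _ = z * (p * (u * v)) := by rw [hqv1]
    _ = (z * p) * (u * v) := by simp only [mul_assoc]

lemma DR [Fintype M] (hrect : IsRectangular M) {u v p q : M}
    (hu : u = u * p * u) (hv : v = v * q * v) (hmem : u ∈ twoSidedIdeal v) :
    ∃ z, u = (u * v) * z := by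
  obtain ⟨x, y, hxy⟩ := hmem
  have hgg : (p * u) * (p * u) = p * u := by
    have h1 : (p * u) * (p * u) = p * (u * p * u) := by simp only [mul_assoc]
    rw [h1, ← hu]
  have hss : (v * q) * (v * q) = v * q := by
    have h1 : (v * q) * (v * q) = (v * q * v) * q := by simp only [mul_assoc]
    rw [h1, ← hv]
  have hv1 : ∀ t : M, v * (q * (v * t)) = v * t := fun t => by
    rw [← mul_assoc, ← mul_assoc, ← hv]
  have hus : u * (p * u) = u := by rw [← mul_assoc, ← hu]
  have hmem2 : (p * u) ∈ twoSidedIdeal (v * q) := by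
    refine ⟨p * x, v * y, ?_⟩
    rw [hxy]
    simp only [mul_assoc]
    rw [hv1]
  obtain ⟨z, hz⟩ := Dprime_R hrect hss hgg hmem2
  refine ⟨q * z, ?_⟩
  calc u = u * (p * u) := hus.symm
    _ = u * (((p * u) * (v * q)) * z) := by rw [← hz]
    _ = (u * (p * u)) * (v * (q * z)) := by simp only [mul_assoc]
    _ = u * (v * (q * z)) := by rw [hus]
    _ = (u * v) * (q * z) := by simp only [mul_assoc]


lemma MAIN_aux [Fintype M] {e f m : M} (he : e * e = e)
    (hair : ∀ s t : M, m = s * t → f ∈ twoSidedIdeal s ∨ e ∈ twoSidedIdeal t) :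
    ∀ l : List M, (∀ x ∈ l, ∃ u : M, x = x * u * x) → ∀ b : M, b = f * b →
      f ∈ twoSidedIdeal b → m = b * (l.prod * e) →
      ∃ b' a', m = b' * a' ∧ b' = f * b' ∧ f ∈ twoSidedIdeal b' ∧
        a' = a' * e ∧ e ∈ twoSidedIdeal a' := by
  intro l
  induction l with
  | nil =>
    intro _ b hb1 hb2 hprod
    exact ⟨b, e, by simpa using hprod, hb1, hb2, he.symm, mem_tsi_self e⟩
  | cons r l ih =>
    intro hreg b hb1 hb2 hprod
    have hprod' : m = b * (r * (l.prod * e)) := by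
      rw [hprod, List.prod_cons]
      simp only [mul_assoc]
    by_cases hc : f ∈ twoSidedIdeal (b * r)
    · refine ih (fun x hx => hreg x (List.mem_cons_of_mem _ hx)) (b * r) ?_ hc ?_
      · conv_lhs => rw [hb1]
        rw [mul_assoc]
      · rw [hprod']
        simp only [mul_assoc]
    · obtain ⟨w, hw⟩ := hreg r List.mem_cons_self
      have hrr : (r * w) * (r * (l.prod * e)) = r * (l.prod * e) := by
        calc (r * w) * (r * (l.prod * e)) = ((r * w) * r) * (l.prod * e) :=
              (mul_assoc _ _ _).symm
          _ = r * (l.prod * e) := by rw [← hw]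
      have hsplit : m = (b * (r * w)) * (r * (l.prod * e)) := by
        calc m = b * (r * (l.prod * e)) := hprod'
          _ = b * ((r * w) * (r * (l.prod * e))) := by conv_lhs => rw [← hrr]
          _ = (b * (r * w)) * (r * (l.prod * e)) := (mul_assoc _ _ _).symm
      rcases hair _ _ hsplit with hf' | he'
      · refine absurd ?_ hc
        obtain ⟨A, B, hAB⟩ := hf'
        refine ⟨A, w * B, ?_⟩
        rw [hAB]
        simp only [mul_assoc]
      · refine ⟨b, r * (l.prod * e), hprod', hb1, hb2, ?_, he'⟩
        simp only [mul_assoc]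
        rw [he]


end AIaux

open AIaux

/-- Almost irreducible morphisms in the Karoubi envelope of a finite rectangular monoid
generated by its regular elements. -/
theorem almost_irreducible_in_regular_generated_rectangular_monoid
    {M : Type*} [Monoid M] [Fintype M] (hrect : IsRectangular M)
    (hgen : ∀ m : M, ∃ l : List M, (∀ x ∈ l, ∃ u : M, x = x * u * x) ∧ l.prod = m)
    (e f m : M) (he : e * e = e) (hf : f * f = f) (hm : m = f * m * e)
    (hair : ¬ ∃ s t : M, m = s * t ∧ s ∈ nup (twoSidedIdeal f) ∧ t ∈ nup (twoSidedIdeal e)) :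
    -- (1) incomparable case: split mono followed by split epi
    (¬ twoSidedIdeal e ⊆ twoSidedIdeal f → ¬ twoSidedIdeal f ⊆ twoSidedIdeal e →
      ∃ a b : M, m = b * a ∧ leftIdeal a = leftIdeal e ∧ rightIdeal b = rightIdeal f) ∧
    -- (2) `X ⊊ Y`: split monomorphism
    (twoSidedIdeal e ⊂ twoSidedIdeal f → leftIdeal m = leftIdeal e) ∧
    -- (3) `Y ⊊ X`: split epimorphism
    (twoSidedIdeal f ⊂ twoSidedIdeal e → rightIdeal m = rightIdeal f) ∧
    -- (4) `e = f`: `m` is a unit of `e*M*e`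
    (e = f → ∃ u : M, u = e * u * e ∧ u * m = e ∧ m * u = e) ∧
    -- converses to (2), (3), (4)
    (twoSidedIdeal e ⊂ twoSidedIdeal f → ∀ m' : M, m' = f * m' * e →
      leftIdeal m' = leftIdeal e →
      ¬ ∃ s t : M, m' = s * t ∧ s ∈ nup (twoSidedIdeal f) ∧ t ∈ nup (twoSidedIdeal e)) ∧
    (twoSidedIdeal f ⊂ twoSidedIdeal e → ∀ m' : M, m' = f * m' * e →
      rightIdeal m' = rightIdeal f →
      ¬ ∃ s t : M, m' = s * t ∧ s ∈ nup (twoSidedIdeal f) ∧ t ∈ nup (twoSidedIdeal e)) ∧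
    (e = f → ∀ m' : M, m' = e * m' * e →
      (∃ u : M, u = e * u * e ∧ u * m' = e ∧ m' * u = e) →
      ¬ ∃ s t : M, m' = s * t ∧ s ∈ nup (twoSidedIdeal f) ∧ t ∈ nup (twoSidedIdeal e)) := by
  have hair' : ∀ s t : M, m = s * t → f ∈ twoSidedIdeal s ∨ e ∈ twoSidedIdeal t := by
    intro s t hst
    by_contra hcon
    push_neg at hcon
    exact hair ⟨s, t, hst, fun h => hcon.1 (h (mem_tsi_self f)),
      fun h => hcon.2 (h (mem_tsi_self e))⟩
  obtain ⟨l, hlreg, hlprod⟩ := hgen m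
  have hinit : m = f * (l.prod * e) := by
    rw [hlprod, ← mul_assoc]; exact hm
  obtain ⟨b, a, hba, hb1, hbf, ha1, hea⟩ :=
    MAIN_aux he hair' l hlreg f hf.symm (mem_tsi_self f) hinit
  obtain ⟨p', q', hpq⟩ := hbf
  have hfb2 : f = p' * (f * (b * q')) := by
    conv_lhs => rw [hpq]
    conv_lhs => rw [hb1]
    simp only [mul_assoc]
  obtain ⟨d0, hd0⟩ := stab_R hfb2
  have hbf' : f ∈ twoSidedIdeal b := ⟨p', q', hpq⟩
  have hfd : f = b * d0 := by
    calc f = f * (b * d0) := hd0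
      _ = (f * b) * d0 := (mul_assoc f b d0).symm
      _ = b * d0 := by rw [← hb1]
  have hRb : rightIdeal b = rightIdeal f := by
    ext w; constructor
    · rintro ⟨c, rfl⟩
      refine ⟨b * c, ?_⟩
      conv_lhs => rw [hb1]
      exact mul_assoc f b c
    · rintro ⟨c, rfl⟩
      refine ⟨d0 * c, ?_⟩
      conv_lhs => rw [hfd]
      exact mul_assoc b d0 c
  obtain ⟨p2, q2, hpq2⟩ := hea
  have hea2 : e = p2 * (a * (e * q2)) := by
    conv_lhs => rw [hpq2]
    conv_lhs => rw [ha1]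
    simp only [mul_assoc]
  obtain ⟨z0, hz0⟩ := stab_L hea2
  have hea' : e ∈ twoSidedIdeal a := ⟨p2, q2, hpq2⟩
  have hze : e = z0 * a := by
    calc e = z0 * (a * e) := hz0
      _ = z0 * a := by rw [← ha1]
  have hLa : leftIdeal a = leftIdeal e := by
    ext w; constructor
    · rintro ⟨c, rfl⟩
      refine ⟨c * a, ?_⟩
      conv_lhs => rw [ha1]
      exact (mul_assoc c a e).symm
    · rintro ⟨c, rfl⟩
      refine ⟨c * z0, ?_⟩
      conv_lhs => rw [hze]
      exact (mul_assoc c z0 a).symm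
  have hureg : b = b * d0 * b := by
    calc b = f * b := hb1
      _ = b * d0 * b := by rw [hfd]
  have havreg : a = a * z0 * a := by
    calc a = a * e := ha1
      _ = a * (z0 * a) := by rw [hze]
      _ = a * z0 * a := (mul_assoc a z0 a).symm
  have hbmem : b ∈ twoSidedIdeal f := ⟨1, b, by rw [one_mul]; exact hb1⟩
  have htb : twoSidedIdeal b = twoSidedIdeal f := tsi_eq hbmem hbf'
  have hamem : a ∈ twoSidedIdeal e := ⟨a, 1, by rw [mul_one]; exact ha1⟩
  have hta : twoSidedIdeal a = twoSidedIdeal e := tsi_eq hamem hea'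
  refine ⟨fun _ _ => ⟨a, b, hba, hLa, hRb⟩, ?_, ?_, ?_, ?_, ?_, ?_⟩
  · -- (2)
    intro hss
    have hab : a ∈ twoSidedIdeal b := by rw [htb]; exact hss.subset hamem
    obtain ⟨w1, hw1⟩ := DL hrect hureg havreg hab
    have hwm : a = w1 * m := by rw [hba]; exact hw1
    have hLm : leftIdeal m = leftIdeal a := by
      ext w; constructor
      · rintro ⟨c, rfl⟩
        refine ⟨c * b, ?_⟩
        rw [hba]
        exact (mul_assoc c b a).symm
      · rintro ⟨c, rfl⟩
        refine ⟨c * w1, ?_⟩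
        conv_lhs => rw [hwm]
        exact (mul_assoc c w1 m).symm
    exact hLm.trans hLa
  · -- (3)
    intro hss
    have hbmem_a : b ∈ twoSidedIdeal a := by rw [hta]; exact hss.subset hbmem
    obtain ⟨w2, hw2⟩ := DR hrect hureg havreg hbmem_a
    have hwm : b = m * w2 := by rw [hba]; exact hw2
    have hRm : rightIdeal m = rightIdeal b := by
      ext w; constructor
      · rintro ⟨c, rfl⟩
        refine ⟨a * c, ?_⟩
        rw [hba]
        exact mul_assoc b a c
      · rintro ⟨c, rfl⟩
        refine ⟨w2 * c, ?_⟩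
        conv_lhs => rw [hwm]
        exact mul_assoc m w2 c
    exact hRm.trans hRb
  · -- (4)
    intro hef
    subst hef
    have hab : a ∈ twoSidedIdeal b := by rw [htb, ← hta]; exact mem_tsi_self a
    have hbmem_a : b ∈ twoSidedIdeal a := by rw [hta, ← htb]; exact mem_tsi_self b
    obtain ⟨w1, hw1⟩ := DL hrect hureg havreg hab
    obtain ⟨w2, hw2⟩ := DR hrect hureg havreg hbmem_a
    have hx0 : e = (z0 * w1) * m := by
      rw [hba]
      calc e = z0 * a := hze
        _ = z0 * (w1 * (b * a)) := by conv_lhs => rw [hw1]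
        _ = (z0 * w1) * (b * a) := (mul_assoc _ _ _).symm
    have hy0 : e = m * (w2 * d0) := by
      rw [hba]
      calc e = b * d0 := hfd
        _ = ((b * a) * w2) * d0 := by conv_lhs => rw [hw2]
        _ = (b * a) * (w2 * d0) := mul_assoc _ _ _
    have hem : e * m = m := by
      conv_lhs => rw [hm]
      calc e * (e * m * e) = (e * (e * m)) * e := (mul_assoc _ _ _).symm
        _ = ((e * e) * m) * e := by rw [← mul_assoc e e m]
        _ = (e * m) * e := by rw [he]
        _ = m := hm.symm
    have hme : m * e = m := by
      conv_lhs => rw [hm]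
      calc (e * m * e) * e = (e * m) * (e * e) := mul_assoc _ _ _
        _ = (e * m) * e := by rw [he]
        _ = m := hm.symm
    have hy0' : m * ((w2 * d0) * e) = e := by
      calc m * ((w2 * d0) * e) = (m * (w2 * d0)) * e := (mul_assoc _ _ _).symm
        _ = e * e := by rw [← hy0]
        _ = e := he
    have hkey : e * ((z0 * w1) * e) = e * ((w2 * d0) * e) := by
      calc e * ((z0 * w1) * e) = (e * (z0 * w1)) * e := (mul_assoc _ _ _).symm
        _ = (e * (z0 * w1)) * (m * ((w2 * d0) * e)) := by rw [hy0']
        _ = ((e * (z0 * w1)) * m) * ((w2 * d0) * e) := (mul_assoc _ _ _).symm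
        _ = (e * ((z0 * w1) * m)) * ((w2 * d0) * e) := by rw [mul_assoc e (z0 * w1) m]
        _ = (e * e) * ((w2 * d0) * e) := by rw [← hx0]
        _ = e * ((w2 * d0) * e) := by rw [he]
    refine ⟨e * ((z0 * w1) * e), ?_, ?_, ?_⟩
    · rw [← mul_assoc e e ((z0 * w1) * e), he, mul_assoc e ((z0 * w1) * e) e,
        mul_assoc (z0 * w1) e e, he]
    · calc (e * ((z0 * w1) * e)) * m = e * ((z0 * w1) * (e * m)) := by
            rw [mul_assoc e ((z0 * w1) * e) m, mul_assoc (z0 * w1) e m]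
        _ = e * ((z0 * w1) * m) := by rw [hem]
        _ = e * e := by rw [← hx0]
        _ = e := he
    · calc m * (e * ((z0 * w1) * e)) = m * (e * ((w2 * d0) * e)) := by rw [hkey]
        _ = (m * e) * ((w2 * d0) * e) := (mul_assoc _ _ _).symm
        _ = m * ((w2 * d0) * e) := by rw [hme]
        _ = e := hy0'
  · -- converse (2)
    rintro _ m' _ hL ⟨s, t, hst, -, ht⟩
    obtain ⟨c, hc⟩ : e ∈ leftIdeal m' := by rw [hL]; exact ⟨1, (one_mul e).symm⟩
    refine ht (tsi_subset_of_mem ⟨c * s, 1, ?_⟩)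
    rw [mul_one, hc, hst]
    exact (mul_assoc c s t).symm
  · -- converse (3)
    rintro _ m' _ hR ⟨s, t, hst, hs, -⟩
    obtain ⟨c, hc⟩ : f ∈ rightIdeal m' := by rw [hR]; exact ⟨1, (mul_one f).symm⟩
    refine hs (tsi_subset_of_mem ⟨1, t * c, ?_⟩)
    rw [one_mul, hc, hst]
    exact mul_assoc s t c
  · -- converse (4)
    rintro hef m' _ ⟨u, -, hu2, -⟩ ⟨s, t, hst, -, ht⟩
    refine ht (tsi_subset_of_mem ⟨u * s, 1, ?_⟩)
    rw [mul_one, ← hu2, hst]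
    exact (mul_assoc u s t).symm
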